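/- Let X be an n×n complex positive semidefinite matrix with trace equal to 1. Then the traces Tr(X^2) and Tr(X^3) are real and satisfy (Tr(X^2))^2 ≤ Tr(X^3). -/

import Mathlib

open scoped ComplexOrder

lemma trace_pow_eq {n : Type*} [Fintype n] [DecidableEq n] (X : Matrix n n ℂ)
    (h : X.IsHermitian) (k : ℕ) (hk : k ≠ 0) :
    (X ^ k).trace = ((∑ i, h.eigenvalues i ^ k : ℝ) : ℂ) := by
  set U : Matrix n n ℂ := (h.eigenvectorUnitary : Matrix n n ℂ) with hUdef
  set D : Matrix n n ℂ := Matrix.diagonal (RCLike.ofReal ∘ h.eigenvalues) with hDdef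
  have hU : star U * U = 1 := (Matrix.mem_unitaryGroup_iff').mp (h.eigenvectorUnitary).2
  have key : ∀ A B : Matrix n n ℂ, (U * A * star U) * (U * B * star U) = U * (A * B) * star U := by
    intro A B
    simp only [Matrix.mul_assoc]
    rw [← Matrix.mul_assoc (star U) U, hU, Matrix.one_mul]
  nth_rewrite 1 [h.spectral_theorem]
  have hpow : (U * D * star U) ^ k = U * D ^ k * star U := by
    induction k with
    | zero => omega
    | succ m ih =>
      rcases Nat.eq_zero_or_pos m with hm | hm
      · subst hm; simp
      · rw [pow_succ, ih (by omega), key, ← pow_succ]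
  rw [Unitary.conjStarAlgAut_apply, ← hUdef, ← hDdef]
  rw [hpow, Matrix.trace_mul_cycle, hU, Matrix.one_mul,
    Matrix.diagonal_pow, Matrix.trace_diagonal]
  push_cast
  rfl

/-- **Proposition 1 (the p3-PPT condition).**
For every positive semidefinite complex matrix `X` with unit trace,
the traces `Tr(X^2)` and `Tr(X^3)` are real and satisfy `(Tr(X^2))^2 ≤ Tr(X^3)`. -/
theorem p3_ppt_condition {n : Type*} [Fintype n] [Nonempty n] [DecidableEq n]
    (X : Matrix n n ℂ) (hX : X.PosSemidef) (htr : X.trace = 1) :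
    ∃ t₂ t₃ : ℝ, (X ^ 2).trace = (t₂ : ℂ) ∧ (X ^ 3).trace = (t₃ : ℂ) ∧ t₂ ^ 2 ≤ t₃ := by
  set lam := hX.1.eigenvalues with hlam
  have hnn : ∀ i, 0 ≤ lam i := fun i => hX.eigenvalues_nonneg i
  refine ⟨∑ i, lam i ^ 2, ∑ i, lam i ^ 3, trace_pow_eq X hX.1 2 (by norm_num),
    trace_pow_eq X hX.1 3 (by norm_num), ?_⟩
  have h1 : ∑ i, lam i = 1 := by
    have := trace_pow_eq X hX.1 1 one_ne_zero
    simp only [pow_one] at this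
    rw [htr] at this
    exact_mod_cast this.symm
  have := Finset.sum_mul_sq_le_sq_mul_sq Finset.univ (fun i => Real.sqrt (lam i))
      (fun i => Real.sqrt (lam i) * lam i)
  have h2 : ∀ i ∈ Finset.univ, Real.sqrt (lam i) * (Real.sqrt (lam i) * lam i) = lam i ^ 2 := by
    intro i _
    rw [← mul_assoc, Real.mul_self_sqrt (hnn i)]
    ring
  have h3 : ∀ i ∈ Finset.univ, Real.sqrt (lam i) ^ 2 = lam i := fun i _ =>
    Real.sq_sqrt (hnn i)
  have h4 : ∀ i ∈ Finset.univ, (Real.sqrt (lam i) * lam i) ^ 2 = lam i ^ 3 := by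
    intro i _
    rw [mul_pow, Real.sq_sqrt (hnn i)]
    ring
  rw [Finset.sum_congr rfl h2, Finset.sum_congr rfl h3, Finset.sum_congr rfl h4, h1, one_mul]
    at this
  exact this
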